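/- arXiv:2510.26127 — 4 statements merged into one kernel-verified Lean document; each statement's English description precedes it below -/
import Mathlib

section
/- Let q be a prime and let a, b, c be nonzero elements of ℚ_q. Then (a, b·c) is q-solvable if and only if ((a, b) is q-solvable ↔ (a, c) is q-solvable). (This expresses the multiplicativity of the Hilbert symbol: (a,b)_q (a,c)_q = (a,bc)_q.) -/
/-- For a prime `q` and `a b : ℚ_[q]`, the pair `(a, b)` is `q`-solvable if
`a·x² + b·y² = z²` has a solution in `ℚ_[q]` with `(x, y, z) ≠ (0, 0, 0)`. -/
def QSolvable {q : ℕ} [Fact q.Prime] (a b : ℚ_[q]) : Prop :=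
  ∃ x y z : ℚ_[q], ¬(x = 0 ∧ y = 0 ∧ z = 0) ∧ a * x ^ 2 + b * y ^ 2 = z ^ 2

variable {q : ℕ} [Fact q.Prime]

/-- `b` is represented by the norm form `z² - a·x²`. -/
def NRep (a b : ℚ_[q]) : Prop := ∃ x z : ℚ_[q], z ^ 2 - a * x ^ 2 = b

theorem rep_sq (a s : ℚ_[q]) : NRep a (s ^ 2) := ⟨0, s, by ring⟩

theorem rep_neg_a (a : ℚ_[q]) : NRep a (-a) := ⟨1, 0, by ring⟩

theorem rep_mul {a b c : ℚ_[q]} (hb : NRep a b) (hc : NRep a c) : NRep a (b * c) := by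
  obtain ⟨x₁, z₁, h₁⟩ := hb
  obtain ⟨x₂, z₂, h₂⟩ := hc
  exact ⟨z₁ * x₂ + x₁ * z₂, z₁ * z₂ + a * x₁ * x₂, by rw [← h₁, ← h₂]; ring⟩

theorem rep_congr {a b c : ℚ_[q]} (hb : NRep a b) (h : b = c) : NRep a c := h ▸ hb

theorem rep_mul_sq {a b : ℚ_[q]} (s : ℚ_[q]) (hb : NRep a b) : NRep a (b * s ^ 2) :=
  rep_mul hb (rep_sq a s)

theorem rep_inv {a b : ℚ_[q]} (hb0 : b ≠ 0) (hb : NRep a b) : NRep a b⁻¹ := by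
  obtain ⟨x, z, h⟩ := hb
  refine ⟨x / b, z / b, ?_⟩
  rw [div_pow, div_pow, mul_div_assoc', div_sub_div_same, h, sq,
    div_mul_cancel_left₀ hb0, inv_eq_one_div]

theorem rep_cancel {a b c : ℚ_[q]} (hb0 : b ≠ 0) (hb : NRep a b) (hbc : NRep a (b * c)) :
    NRep a c := by
  have := rep_mul (rep_inv hb0 hb) hbc
  rwa [inv_mul_cancel_left₀ hb0] at this

theorem rep_of_isSquare {a : ℚ_[q]} (ha : a ≠ 0) (h : IsSquare a) (b : ℚ_[q]) : NRep a b := by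
  obtain ⟨s, rfl⟩ := h
  have hs : s ≠ 0 := by rintro rfl; simp at ha
  refine ⟨(b - 1) / (2 * s), (b + 1) / 2, ?_⟩
  have h2 : (2 : ℚ_[q]) ≠ 0 := two_ne_zero
  field_simp
  ring

theorem rep_scale_a {a : ℚ_[q]} (u : ℚ_[q]) (hu : u ≠ 0) {b : ℚ_[q]} (h : NRep a b) :
    NRep (a * u ^ 2) b := by
  obtain ⟨x, z, hh⟩ := h
  exact ⟨x / u, z, by field_simp; linear_combination hh⟩

theorem qsolvable_iff_rep {a b : ℚ_[q]} (ha : a ≠ 0) (hb : b ≠ 0) :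
    QSolvable a b ↔ NRep a b := by
  constructor
  · rintro ⟨x, y, z, hne, h⟩
    by_cases hy : y = 0
    · subst hy
      have hx : x ≠ 0 := by
        rintro rfl
        have hz : z ^ 2 = 0 := by linear_combination -h
        exact hne ⟨rfl, rfl, by simpa [pow_eq_zero_iff] using hz⟩
      have : a = (z / x) ^ 2 := by
        field_simp
        linear_combination h
      exact rep_of_isSquare ha ⟨z / x, by rw [this]; ring⟩ b
    · exact ⟨x / y, z / y, by field_simp; linear_combination -h⟩
  · rintro ⟨x, z, h⟩
    exact ⟨x, 1, z, by simp, by linear_combination -h⟩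

theorem toZMod_eq_zero_iff_norm_lt (x : ℤ_[q]) : PadicInt.toZMod x = 0 ↔ ‖x‖ < 1 := by
  rw [← RingHom.mem_ker, PadicInt.ker_toZMod, IsLocalRing.mem_maximalIdeal,
    mem_nonunits_iff, PadicInt.not_isUnit_iff]

theorem norm_eq_one_iff_toZMod_ne (x : ℤ_[q]) : ‖x‖ = 1 ↔ PadicInt.toZMod x ≠ 0 := by
  rw [ne_eq, toZMod_eq_zero_iff_norm_lt, not_lt]
  constructor
  · intro h; rw [h]
  · intro h; exact le_antisymm (PadicInt.norm_le_one x) h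

theorem norm_two_odd (hq2 : q ≠ 2) : ‖(2 : ℤ_[q])‖ = 1 := by
  have : ((2 : ℤ) : ℤ_[q]) = 2 := by push_cast; rfl
  rw [← this]
  rw [norm_eq_one_iff_toZMod_ne, ne_eq, toZMod_eq_zero_iff_norm_lt] at *
  rw [this, ← this, PadicInt.norm_int_lt_one_iff_dvd]
  intro hdvd
  have : q ∣ 2 := by exact_mod_cast hdvd
  exact hq2 ((Nat.prime_dvd_prime_iff_eq Fact.out Nat.prime_two).mp this)

theorem exists_sqrt_of_residue (hq2 : q ≠ 2) (u : ℤ_[q]) (hu : ‖u‖ = 1)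
    (h : IsSquare (PadicInt.toZMod u)) : ∃ s : ℤ_[q], s ^ 2 = u := by
  obtain ⟨w, hw⟩ := h
  have hw0 : w ≠ 0 := by
    rintro rfl
    rw [norm_eq_one_iff_toZMod_ne] at hu
    simp [hw] at hu
  set a : ℤ_[q] := ((w.val : ℕ) : ℤ_[q]) with ha
  have hta : PadicInt.toZMod a = w := by
    rw [ha, map_natCast, ZMod.natCast_val, ZMod.cast_id]
  set F : Polynomial ℤ_[q] := Polynomial.X ^ 2 - Polynomial.C u with hF
  have heval : F.eval a = a ^ 2 - u := by simp [hF]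
  have hder : F.derivative.eval a = 2 * a := by
    simp [hF, Polynomial.derivative_sub, Polynomial.derivative_X_pow]
    left; norm_num
  have ha1 : ‖a‖ = 1 := by rw [norm_eq_one_iff_toZMod_ne, hta]; exact hw0
  have hnorm : ‖F.eval a‖ < ‖F.derivative.eval a‖ ^ 2 := by
    have h1 : ‖2 * a‖ = 1 := by
      rw [norm_mul, ha1, norm_two_odd hq2, mul_one]
    have h2 : ‖a ^ 2 - u‖ < 1 := by
      rw [← toZMod_eq_zero_iff_norm_lt, map_sub, map_pow, hta, hw, sq]
      ring
    rw [heval, hder, h1, one_pow]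
    exact h2
  obtain ⟨z, hz, -⟩ := hensels_lemma (p := q) hnorm
  refine ⟨z, ?_⟩
  have : z ^ 2 - u = 0 := by simpa [hF] using hz
  exact sub_eq_zero.mp this

theorem residue_isSquare_of_sq (u : ℤ_[q]) (s : ℚ_[q]) (hs : s ^ 2 = u) :
    IsSquare (PadicInt.toZMod u) := by
  have hsle : ‖s‖ ≤ 1 := by
    by_contra hgt
    push_neg at hgt
    have h2 : ‖(u : ℚ_[q])‖ ≤ 1 := u.2
    rw [← hs, norm_pow] at h2
    nlinarith [norm_nonneg s]
  set t : ℤ_[q] := ⟨s, hsle⟩ with ht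
  have htu : t ^ 2 = u := by
    apply Subtype.ext
    push_cast [ht]
    exact hs
  exact ⟨PadicInt.toZMod t, by rw [← htu, map_pow, sq]⟩

theorem zmod_card_odd (hq2 : q ≠ 2) : Fintype.card (ZMod q) % 2 = 1 := by
  rw [ZMod.card]
  exact Nat.odd_iff.mp ((Fact.out : q.Prime).odd_of_ne_two hq2)

/-- Over `ZMod q`, `z² = a x² + u` has a solution. -/
theorem zmod_conic (hq2 : q ≠ 2) (a u : ZMod q) (ha : a ≠ 0) :
    ∃ x z : ZMod q, z ^ 2 = a * x ^ 2 + u := by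
  classical
  set f : Polynomial (ZMod q) := Polynomial.C a * Polynomial.X ^ 2 + Polynomial.C u with hf
  set g : Polynomial (ZMod q) := -(Polynomial.X ^ 2) with hg
  have hf2 : f.degree = 2 := by
    rw [hf]
    rw [Polynomial.degree_add_eq_left_of_degree_lt]
    · exact Polynomial.degree_C_mul_X_pow 2 ha
    · rw [Polynomial.degree_C_mul_X_pow 2 ha]
      exact lt_of_le_of_lt Polynomial.degree_C_le (by norm_num)
  have hg2 : g.degree = 2 := by
    rw [hg, Polynomial.degree_neg, Polynomial.degree_X_pow]; norm_num
  obtain ⟨x, z, hxz⟩ := FiniteField.exists_root_sum_quadratic hf2 hg2 (zmod_card_odd hq2)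
  refine ⟨x, z, ?_⟩
  simp only [hf, hg, Polynomial.eval_add, Polynomial.eval_mul, Polynomial.eval_pow,
    Polynomial.eval_C, Polynomial.eval_X, Polynomial.eval_neg] at hxz
  linear_combination -hxz

/-- For odd `q`, any unit is represented by `z² - a x²` when `a` is a unit. -/
theorem unit_rep (hq2 : q ≠ 2) (a u : ℤ_[q]) (ha : ‖a‖ = 1) (hu : ‖u‖ = 1) :
    ∃ x z : ℚ_[q], z ^ 2 - (a : ℚ_[q]) * x ^ 2 = u := by
  have ha0 : PadicInt.toZMod a ≠ 0 := (norm_eq_one_iff_toZMod_ne a).mp ha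
  have hu0 : PadicInt.toZMod u ≠ 0 := (norm_eq_one_iff_toZMod_ne u).mp hu
  obtain ⟨x, z, hxz⟩ := zmod_conic hq2 (PadicInt.toZMod a) (PadicInt.toZMod u) ha0
  by_cases hz : z = 0
  · -- then -(a*u) has square nonzero residue (a*x)^2
    subst hz
    have hx0 : x ≠ 0 := by
      intro h0
      rw [h0] at hxz
      simp at hxz
      exact hu0 hxz.symm
    have hres : PadicInt.toZMod (-(a * u)) = (PadicInt.toZMod a * x) ^ 2 := by
      rw [map_neg, map_mul]
      rw [show (0:ZMod q)^2 = 0 by ring] at hxz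
      have : PadicInt.toZMod u = -(PadicInt.toZMod a * x ^ 2) := by linear_combination -hxz
      rw [this]; ring
    have hnorm : ‖-(a * u)‖ = 1 := by
      rw [norm_neg, norm_mul, ha, hu, mul_one]
    obtain ⟨s, hs⟩ := exists_sqrt_of_residue hq2 _ hnorm
      ⟨PadicInt.toZMod a * x, by rw [hres, sq]⟩
    have haq : (a : ℚ_[q]) ≠ 0 := by
      rw [ne_eq, PadicInt.coe_eq_zero]
      intro h0
      rw [h0] at ha; simp at ha
    refine ⟨(s : ℚ_[q]) / a, 0, ?_⟩
    have hs' : (s : ℚ_[q]) ^ 2 = -((a:ℚ_[q]) * u) := by exact_mod_cast congrArg _ hs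
    field_simp
    linear_combination -hs'
  · -- z ≠ 0 : residue of a * x̂² + u is the nonzero square z²
    set xh : ℤ_[q] := ((x.val : ℕ) : ℤ_[q]) with hxh
    have htx : PadicInt.toZMod xh = x := by
      rw [hxh, map_natCast, ZMod.natCast_val, ZMod.cast_id]
    set w : ℤ_[q] := a * xh ^ 2 + u with hw
    have hresw : PadicInt.toZMod w = z ^ 2 := by
      rw [hw, map_add, map_mul, map_pow, htx, hxz]
    have hwnorm : ‖w‖ = 1 := by
      rw [norm_eq_one_iff_toZMod_ne, hresw]
      exact pow_ne_zero 2 hz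
    obtain ⟨s, hs⟩ := exists_sqrt_of_residue hq2 w hwnorm ⟨z, by rw [hresw, sq]⟩
    refine ⟨(xh : ℚ_[q]), (s : ℚ_[q]), ?_⟩
    have hs' : (s : ℚ_[q]) ^ 2 = (a:ℚ_[q]) * (xh:ℚ_[q]) ^ 2 + u := by
      rw [show ((a:ℚ_[q]) * (xh:ℚ_[q]) ^ 2 + (u:ℚ_[q])) = ((w : ℤ_[q]) : ℚ_[q]) by push_cast [hw]; ring]
      exact_mod_cast congrArg _ hs
    linear_combination hs'

theorem zmod_nonsquare_mul (x y : ZMod q) (hx : ¬IsSquare x) (hy : ¬IsSquare y) :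
    IsSquare (x * y) := by
  have hx0 : x ≠ 0 := fun h => hx (h ▸ ⟨0, by ring⟩)
  have hy0 : y ≠ 0 := fun h => hy (h ▸ ⟨0, by ring⟩)
  have h1 : quadraticChar (ZMod q) x = -1 := (quadraticChar_neg_one_iff_not_isSquare).mpr hx
  have h2 : quadraticChar (ZMod q) y = -1 := (quadraticChar_neg_one_iff_not_isSquare).mpr hy
  have : quadraticChar (ZMod q) (x * y) = 1 := by rw [map_mul, h1, h2]; ring
  exact (quadraticChar_one_iff_isSquare (mul_ne_zero hx0 hy0)).mp this

theorem q_ne_zero' : (q : ℚ_[q]) ≠ 0 :=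
  Nat.cast_ne_zero.mpr (Fact.out : q.Prime).ne_zero

theorem exists_sq_unit (t : ℚ_[q]) (ht : t ≠ 0) :
    ∃ (s : ℚ_[q]) (u : ℤ_[q]), s ≠ 0 ∧ ‖u‖ = 1 ∧
      (t = s ^ 2 * u ∨ t = s ^ 2 * q * u) := by
  set n := t.valuation with hn
  have hqR : (1:ℝ) < (q:ℝ) := by
    exact_mod_cast (Fact.out : q.Prime).one_lt
  have hqR0 : (q:ℝ) ≠ 0 := by positivity
  have hnorm : ‖t‖ = (q:ℝ) ^ (-n) := Padic.norm_eq_zpow_neg_valuation ht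
  set u' : ℚ_[q] := t * (q:ℚ_[q]) ^ (-n) with hu'
  have hu'norm : ‖u'‖ = 1 := by
    rw [hu', norm_mul, Padic.norm_p_zpow, hnorm, ← zpow_add₀ hqR0]
    simp
  have ht' : t = (q:ℚ_[q]) ^ n * u' := by
    rw [hu', ← mul_assoc, mul_comm ((q:ℚ_[q]) ^ n), mul_assoc, ← zpow_add₀ q_ne_zero']
    simp
  set u : ℤ_[q] := ⟨u', by rw [hu'norm]⟩ with hu
  have hcu : (u : ℚ_[q]) = u' := rfl
  have hun : ‖u‖ = 1 := hu'norm
  rcases Int.even_or_odd n with ⟨k, hk⟩ | ⟨k, hk⟩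
  · refine ⟨(q:ℚ_[q]) ^ k, u, zpow_ne_zero _ q_ne_zero', hun, Or.inl ?_⟩
    rw [ht', hcu, ← zpow_natCast _ 2, ← zpow_mul, hk]
    ring_nf
  · refine ⟨(q:ℚ_[q]) ^ k, u, zpow_ne_zero _ q_ne_zero', hun, Or.inr ?_⟩
    rw [ht', hcu, hk]
    rw [zpow_add₀ q_ne_zero', ← zpow_natCast _ 2, ← zpow_mul, zpow_one]
    ring_nf

theorem rep_of_eq_sq_mul {a a' s b : ℚ_[q]} (hs : s ≠ 0) (h : a = s ^ 2 * a')
    (hr : NRep a' b) : NRep a b := by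
  rw [h, mul_comm]
  exact rep_scale_a s hs hr

theorem res_ne_zero {u : ℤ_[q]} (hu : ‖u‖ = 1) : PadicInt.toZMod u ≠ 0 :=
  (norm_eq_one_iff_toZMod_ne u).mp hu

theorem coe_unit_ne_zero {u : ℤ_[q]} (hu : ‖u‖ = 1) : (u : ℚ_[q]) ≠ 0 := by
  rw [ne_eq, PadicInt.coe_eq_zero]
  rintro rfl
  simp at hu

theorem main_odd (hq2 : q ≠ 2) (a b c : ℚ_[q]) (ha : a ≠ 0) (hb : b ≠ 0) (hc : c ≠ 0)
    (hnb : ¬NRep a b) (hnc : ¬NRep a c) : NRep a (b * c) := by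
  obtain ⟨sa, ua, hsa, hua, hda⟩ := exists_sq_unit a ha
  obtain ⟨sb, ub, hsb, hub, hdb⟩ := exists_sq_unit b hb
  obtain ⟨sc, uc, hsc, huc, hdc⟩ := exists_sq_unit c hc
  rcases hda with hda | hda
  · -- a is a square times a unit
    -- then any unit multiple of a square is represented
    have key : ∀ (s : ℚ_[q]) (u : ℤ_[q]), ‖u‖ = 1 → NRep a (s ^ 2 * u) := by
      intro s u hu
      obtain ⟨x, z, hxz⟩ := unit_rep hq2 ua u hua hu
      refine rep_of_eq_sq_mul hsa hda ?_
      exact rep_congr (rep_mul_sq s ⟨x, z, hxz⟩) (mul_comm _ _)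
    rcases hdb with hdb | hdb
    · exact absurd (rep_congr (key sb ub hub) hdb.symm) hnb
    rcases hdc with hdc | hdc
    · exact absurd (rep_congr (key sc uc huc) hdc.symm) hnc
    have : b * c = (sb * sc * q) ^ 2 * (ub * uc) := by
      rw [hdb, hdc]; push_cast; ring
    refine rep_congr (key (sb * sc * q) (ub * uc) ?_) this.symm
    rw [norm_mul, hub, huc, mul_one]
  · -- a = sa² * q * ua
    -- tags : in the `inl` case the residue of ub is not a square;
    -- in the `inr` case the residue of ub * (-ua) is not a square.
    have hda' : a = sa ^ 2 * ((q:ℚ_[q]) * (ua:ℚ_[q])) := by rw [hda]; ring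
    have tag : ∀ (t : ℚ_[q]) (s : ℚ_[q]) (u : ℤ_[q]), t ≠ 0 → s ≠ 0 → ‖u‖ = 1 →
        ¬NRep a t →
        (t = s ^ 2 * u → ¬IsSquare (PadicInt.toZMod u)) ∧
        (t = s ^ 2 * q * u → ¬IsSquare (PadicInt.toZMod (u * (-ua)))) := by
      intro t s u ht hs hu hnt
      constructor
      · intro hdt hsq
        obtain ⟨w, hw⟩ := exists_sqrt_of_residue hq2 u hu hsq
        refine hnt (rep_congr (rep_sq a (s * w)) ?_)
        have hw' : (w : ℚ_[q]) ^ 2 = u := by exact_mod_cast congrArg _ hw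
        rw [hdt, mul_pow, hw']
      · intro hdt hsq
        have hnu : ‖u * (-ua)‖ = 1 := by
          rw [norm_mul, norm_neg, hu, hua, mul_one]
        obtain ⟨w, hw⟩ := exists_sqrt_of_residue hq2 _ hnu hsq
        have hw' : (w : ℚ_[q]) ^ 2 = (u : ℚ_[q]) * (-(ua : ℚ_[q])) := by
          exact_mod_cast congrArg _ hw
        -- t = -(q * ua) * (s * w / ua)^2
        apply hnt
        refine rep_of_eq_sq_mul hsa hda' ?_
        have huaq : (ua : ℚ_[q]) ≠ 0 := coe_unit_ne_zero hua
        refine rep_congr (rep_mul_sq (s * (w:ℚ_[q]) / (ua : ℚ_[q]))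
          (rep_neg_a ((q : ℚ_[q]) * (ua : ℚ_[q])))) ?_
        have : t = s ^ 2 * q * u := hdt
        rw [this]
        field_simp
        ring_nf
        linear_combination (-(q:ℚ_[q])) * hw'
    have huaq : (ua : ℚ_[q]) ≠ 0 := coe_unit_ne_zero hua
    rcases hdb with hdb | hdb <;> rcases hdc with hdc | hdc
    · -- both even: residues of ub, uc nonsquare
      have h1 := (tag b sb ub hb hsb hub hnb).1 hdb
      have h2 := (tag c sc uc hc hsc huc hnc).1 hdc
      have hsq : IsSquare (PadicInt.toZMod (ub * uc)) := by
        rw [map_mul]; exact zmod_nonsquare_mul _ _ h1 h2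
      obtain ⟨w, hw⟩ := exists_sqrt_of_residue hq2 _
        (by rw [norm_mul, hub, huc, mul_one]) hsq
      have hw' : (w : ℚ_[q]) ^ 2 = (ub : ℚ_[q]) * uc := by exact_mod_cast congrArg _ hw
      refine rep_congr (rep_sq a (sb * sc * w)) ?_
      rw [hdb, hdc]
      linear_combination ((sb * sc)^2) * hw'
    · -- mixed
      have h1 := (tag b sb ub hb hsb hub hnb).1 hdb
      have h2 := (tag c sc uc hc hsc huc hnc).2 hdc
      have hsq : IsSquare (PadicInt.toZMod (ub * (uc * (-ua)))) := by
        rw [map_mul]; exact zmod_nonsquare_mul _ _ h1 h2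
      obtain ⟨w, hw⟩ := exists_sqrt_of_residue hq2 _
        (by simp [norm_mul, hub, huc, hua]) hsq
      have hw' : (w : ℚ_[q]) ^ 2 = (ub : ℚ_[q]) * ((uc : ℚ_[q]) * (-(ua : ℚ_[q]))) := by
        exact_mod_cast congrArg _ hw
      refine rep_of_eq_sq_mul hsa hda' ?_
      refine rep_congr (rep_mul_sq (sb * sc * (w:ℚ_[q]) / (ua : ℚ_[q]))
        (rep_neg_a ((q : ℚ_[q]) * (ua : ℚ_[q])))) ?_
      rw [hdb, hdc]
      field_simp
      ring_nf
      linear_combination (-(q:ℚ_[q])) * hw'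
    · -- mixed (other order)
      have h1 := (tag c sc uc hc hsc huc hnc).1 hdc
      have h2 := (tag b sb ub hb hsb hub hnb).2 hdb
      have hsq : IsSquare (PadicInt.toZMod (uc * (ub * (-ua)))) := by
        rw [map_mul]; exact zmod_nonsquare_mul _ _ h1 h2
      obtain ⟨w, hw⟩ := exists_sqrt_of_residue hq2 _
        (by simp [norm_mul, hub, huc, hua]) hsq
      have hw' : (w : ℚ_[q]) ^ 2 = (uc : ℚ_[q]) * ((ub : ℚ_[q]) * (-(ua : ℚ_[q]))) := by
        exact_mod_cast congrArg _ hw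
      refine rep_of_eq_sq_mul hsa hda' ?_
      refine rep_congr (rep_mul_sq (sb * sc * (w:ℚ_[q]) / (ua : ℚ_[q]))
        (rep_neg_a ((q : ℚ_[q]) * (ua : ℚ_[q])))) ?_
      rw [hdb, hdc]
      field_simp
      ring_nf
      linear_combination (-(q:ℚ_[q])) * hw'
    · -- both odd
      have h1 := (tag b sb ub hb hsb hub hnb).2 hdb
      have h2 := (tag c sc uc hc hsc huc hnc).2 hdc
      have hsq : IsSquare (PadicInt.toZMod ((ub * (-ua)) * (uc * (-ua)))) := by
        rw [map_mul]; exact zmod_nonsquare_mul _ _ h1 h2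
      obtain ⟨w, hw⟩ := exists_sqrt_of_residue hq2 _
        (by simp [norm_mul, hub, huc, hua]) hsq
      have hw' : (w : ℚ_[q]) ^ 2 =
          ((ub : ℚ_[q]) * (-(ua : ℚ_[q]))) * ((uc : ℚ_[q]) * (-(ua : ℚ_[q]))) := by
        exact_mod_cast congrArg _ hw
      refine rep_congr (rep_sq a (sb * sc * q * (w:ℚ_[q]) / (ua : ℚ_[q]))) ?_
      rw [hdb, hdc]
      field_simp
      ring_nf
      linear_combination ((q:ℚ_[q])^2) * hw'

theorem sqrt_two_adic (w c : ℤ_[2]) (hc : ‖c‖ = 1) (h : ‖w - c ^ 2‖ ≤ (8:ℝ)⁻¹) :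
    ∃ s : ℤ_[2], s ^ 2 = w := by
  set F : Polynomial ℤ_[2] := Polynomial.X ^ 2 - Polynomial.C w with hF
  have heval : F.eval c = c ^ 2 - w := by simp [hF]
  have hder : F.derivative.eval c = 2 * c := by
    simp [hF, Polynomial.derivative_sub, Polynomial.derivative_X_pow]
    left; norm_num
  have norm2 : ‖(2 : ℤ_[2])‖ = 2⁻¹ := by
    have := PadicInt.norm_p (p := 2)
    simpa using this
  have hnorm : ‖F.eval c‖ < ‖F.derivative.eval c‖ ^ 2 := by
    rw [heval, hder, norm_mul, norm2, hc, norm_sub_rev]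
    calc ‖w - c ^ 2‖ ≤ (8:ℝ)⁻¹ := h
    _ < (2⁻¹ * 1) ^ 2 := by norm_num
  obtain ⟨z, hz, -⟩ := hensels_lemma (p := 2) hnorm
  exact ⟨z, sub_eq_zero.mp (by simpa [hF] using hz)⟩

theorem norm_odd_int (k : ℤ) (hk : ¬ (2:ℤ) ∣ k) : ‖(k : ℤ_[2])‖ = 1 := by
  refine le_antisymm (PadicInt.norm_le_one _) ?_
  by_contra hlt
  push_neg at hlt
  have := (PadicInt.norm_int_lt_one_iff_dvd (p := 2) k).mp hlt
  exact hk (by exact_mod_cast this)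

theorem norm_two' : ‖(2 : ℤ_[2])‖ = 2⁻¹ := by
  have := PadicInt.norm_p (p := 2)
  simpa using this

theorem norm_intpow (n : ℕ) : ‖((2:ℤ_[2]) ^ n)‖ = (2:ℝ)⁻¹ ^ n := by
  rw [norm_pow, norm_two']

/-- every 2-adic unit is a square times one of 1, -1, 5, -5. -/
theorem unit2_decomp (u : ℤ_[2]) (hu : ‖u‖ = 1) :
    ∃ (r σ : ℚ_[2]), (r = 1 ∨ r = -1 ∨ r = 5 ∨ r = -5) ∧ (u : ℚ_[2]) = σ ^ 2 * r := by
  set k := PadicInt.toZModPow 3 u with hk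
  set m := k.val with hm
  have hmlt : m < 8 := k.val_lt
  have hmod := (PadicInt.norm_le_pow_iff_mem_span_pow (u - (m:ℤ_[2])) 3).mpr (by
    rw [← PadicInt.ker_toZModPow, RingHom.mem_ker,
      map_sub, map_natCast, hm, ZMod.natCast_val, ZMod.cast_id, hk, sub_self])
  have hmod' : ‖u - (m : ℤ_[2])‖ ≤ (8:ℝ)⁻¹ := by
    refine le_trans hmod (le_of_eq ?_)
    norm_num
  have hmodd : m % 2 = 1 := by
    rcases Nat.even_or_odd m with he | ho
    · exfalso
      obtain ⟨j, hj⟩ := he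
      have hnm : ‖(m : ℤ_[2])‖ ≤ 2⁻¹ := by
        rw [hj]
        push_cast
        rw [show ((j:ℤ_[2]) + j) = 2 * j by ring, norm_mul]
        have norm2 : ‖(2 : ℤ_[2])‖ = 2⁻¹ := by
          have := PadicInt.norm_p (p := 2)
          simpa using this
        rw [norm2]
        calc 2⁻¹ * ‖(j : ℤ_[2])‖ ≤ 2⁻¹ * 1 :=
          mul_le_mul_of_nonneg_left (PadicInt.norm_le_one _) (by norm_num)
        _ = 2⁻¹ := mul_one _
      have : ‖u‖ ≤ 2⁻¹ := by
        calc ‖u‖ = ‖(u - m) + (m : ℤ_[2])‖ := by ring_nf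
        _ ≤ max ‖u - (m:ℤ_[2])‖ ‖(m : ℤ_[2])‖ := PadicInt.nonarchimedean _ _
        _ ≤ 2⁻¹ := max_le (le_trans hmod' (by norm_num)) hnm
      rw [hu] at this; norm_num at this
    · exact Nat.odd_iff.mp ho
  -- m ∈ {1,3,5,7}
  have key : ∀ r : ℤ, (¬ (2:ℤ) ∣ r) → ‖(m : ℤ_[2]) - (r : ℤ_[2])‖ ≤ (8:ℝ)⁻¹ →
      ∃ σ : ℚ_[2], (u : ℚ_[2]) = σ ^ 2 * r := by
    intro r hrodd hnr
    have hrn : ‖(r : ℤ_[2])‖ = 1 := norm_odd_int r hrodd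
    have hur : ‖u * r - (r : ℤ_[2]) ^ 2‖ ≤ (8:ℝ)⁻¹ := by
      have : u * r - (r:ℤ_[2]) ^ 2 = ((u - m) + ((m : ℤ_[2]) - r)) * r := by push_cast; ring
      rw [this, norm_mul, hrn, mul_one]
      calc ‖(u - (m:ℤ_[2])) + ((m : ℤ_[2]) - r)‖
          ≤ max ‖u - (m:ℤ_[2])‖ ‖(m : ℤ_[2]) - r‖ := PadicInt.nonarchimedean _ _
      _ ≤ (8:ℝ)⁻¹ := max_le hmod' hnr
    obtain ⟨s, hs⟩ := sqrt_two_adic (u * r) r hrn hur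
    have hrne : r ≠ 0 := by rintro rfl; exact hrodd ⟨0, by ring⟩
    have hr0 : ((r : ℤ_[2]) : ℚ_[2]) ≠ 0 := by
      rw [PadicInt.coe_intCast]
      exact_mod_cast hrne
    refine ⟨(s : ℚ_[2]) / ((r:ℤ_[2]) : ℚ_[2]), ?_⟩
    have hs' : ((s:ℚ_[2])) ^ 2 = (u : ℚ_[2]) * ((r:ℤ_[2]):ℚ_[2]) := by exact_mod_cast congrArg _ hs
    rw [show ((r : ℚ_[2])) = ((r:ℤ_[2]) : ℚ_[2]) from (PadicInt.coe_intCast r).symm,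
      div_pow, div_mul_eq_mul_div, hs', sq, mul_div_assoc,
      div_mul_cancel_left₀ hr0, mul_inv_cancel_right₀ hr0]
  have habs : ∀ (mm : ℕ) (r : ℤ), ((mm:ℤ_[2]) - (r:ℤ_[2]) = 0 ∨ (mm:ℤ_[2]) - (r:ℤ_[2]) = 2^3) →
      ‖(mm : ℤ_[2]) - (r : ℤ_[2])‖ ≤ (8:ℝ)⁻¹ := by
    rintro mm r (h | h) <;> rw [h]
    · simp
    · rw [norm_intpow]; norm_num
  interval_cases m
  · omega
  · obtain ⟨σ, hσ⟩ := key 1 (by norm_num) (habs 1 1 (by norm_num))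
    exact ⟨1, σ, by norm_num, by push_cast at hσ ⊢; exact hσ⟩
  · omega
  · obtain ⟨σ, hσ⟩ := key (-5) (by norm_num) (habs 3 (-5) (by right; push_cast; ring))
    exact ⟨-5, σ, by norm_num, by push_cast at hσ ⊢; exact hσ⟩
  · omega
  · obtain ⟨σ, hσ⟩ := key 5 (by norm_num) (habs 5 5 (by norm_num))
    exact ⟨5, σ, by norm_num, by push_cast at hσ ⊢; exact hσ⟩
  · omega
  · obtain ⟨σ, hσ⟩ := key (-1) (by norm_num) (habs 7 (-1) (by right; push_cast; ring))
    exact ⟨-1, σ, by norm_num, by push_cast at hσ ⊢; exact hσ⟩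

theorem sqrtm7 : ∃ s : ℚ_[2], s ^ 2 = -7 := by
  obtain ⟨s, hs⟩ := sqrt_two_adic (-7) 1 (by simp) (by
    rw [show ((-7 : ℤ_[2]) - 1 ^ 2) = -(2 ^ 3) by norm_num, norm_neg, norm_intpow]
    norm_num)
  exact ⟨(s : ℚ_[2]), by exact_mod_cast congrArg _ hs⟩

theorem sqrtm15 : ∃ s : ℚ_[2], s ^ 2 = -15 := by
  obtain ⟨s, hs⟩ := sqrt_two_adic (-15) 1 (by simp) (by
    rw [show ((-15 : ℤ_[2]) - 1 ^ 2) = -(2 ^ 4) by norm_num, norm_neg, norm_intpow]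
    norm_num)
  exact ⟨(s : ℚ_[2]), by exact_mod_cast congrArg _ hs⟩

def IsRep8 (r : ℚ_[2]) : Prop := r = 1 ∨ r = -1 ∨ r = 5 ∨ r = -5 ∨ r = 2 ∨ r = -2 ∨ r = 10 ∨ r = -10

theorem core2_m1 (rb rc : ℚ_[2]) (hrb : IsRep8 rb) (hrc : IsRep8 rc)
    (hnb : ¬NRep (-1 : ℚ_[2]) rb) (hnc : ¬NRep (-1 : ℚ_[2]) rc) :
    NRep (-1 : ℚ_[2]) (rb * rc) := by
  have w1 : NRep (-1 : ℚ_[2]) 1 := rep_congr (rep_sq _ 1) (by norm_num)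
  have w5 : NRep (-1 : ℚ_[2]) (5) := ⟨1, 2, by norm_num⟩
  have w2 : NRep (-1 : ℚ_[2]) (2) := ⟨1, 1, by norm_num⟩
  have w10 : NRep (-1 : ℚ_[2]) (10) := rep_congr (rep_mul w5 w2) (by norm_num)
  rcases hrb with rfl | rfl | rfl | rfl | rfl | rfl | rfl | rfl
  · exact absurd w1 hnb
  · rcases hrc with rfl | rfl | rfl | rfl | rfl | rfl | rfl | rfl
    · exact absurd w1 hnc
    · exact rep_congr (rep_mul_sq ((1 : ℚ_[2])) w1) (by norm_num)
    · exact absurd w5 hnc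
    · exact rep_congr (rep_mul_sq ((1 : ℚ_[2])) w5) (by norm_num)
    · exact absurd w2 hnc
    · exact rep_congr (rep_mul_sq ((1 : ℚ_[2])) w2) (by norm_num)
    · exact absurd w10 hnc
    · exact rep_congr (rep_mul_sq ((1 : ℚ_[2])) w10) (by norm_num)
  · exact absurd w5 hnb
  · rcases hrc with rfl | rfl | rfl | rfl | rfl | rfl | rfl | rfl
    · exact absurd w1 hnc
    · exact rep_congr (rep_mul_sq ((1 : ℚ_[2])) w5) (by norm_num)
    · exact absurd w5 hnc
    · exact rep_congr (rep_mul_sq ((5 : ℚ_[2])) w1) (by norm_num)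
    · exact absurd w2 hnc
    · exact rep_congr (rep_mul_sq ((1 : ℚ_[2])) w10) (by norm_num)
    · exact absurd w10 hnc
    · exact rep_congr (rep_mul_sq ((5 : ℚ_[2])) w2) (by norm_num)
  · exact absurd w2 hnb
  · rcases hrc with rfl | rfl | rfl | rfl | rfl | rfl | rfl | rfl
    · exact absurd w1 hnc
    · exact rep_congr (rep_mul_sq ((1 : ℚ_[2])) w2) (by norm_num)
    · exact absurd w5 hnc
    · exact rep_congr (rep_mul_sq ((1 : ℚ_[2])) w10) (by norm_num)
    · exact absurd w2 hnc
    · exact rep_congr (rep_mul_sq ((2 : ℚ_[2])) w1) (by norm_num)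
    · exact absurd w10 hnc
    · exact rep_congr (rep_mul_sq ((2 : ℚ_[2])) w5) (by norm_num)
  · exact absurd w10 hnb
  · rcases hrc with rfl | rfl | rfl | rfl | rfl | rfl | rfl | rfl
    · exact absurd w1 hnc
    · exact rep_congr (rep_mul_sq ((1 : ℚ_[2])) w10) (by norm_num)
    · exact absurd w5 hnc
    · exact rep_congr (rep_mul_sq ((5 : ℚ_[2])) w2) (by norm_num)
    · exact absurd w2 hnc
    · exact rep_congr (rep_mul_sq ((2 : ℚ_[2])) w5) (by norm_num)
    · exact absurd w10 hnc
    · exact rep_congr (rep_mul_sq ((10 : ℚ_[2])) w1) (by norm_num)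

theorem core2_p5 (rb rc : ℚ_[2]) (hrb : IsRep8 rb) (hrc : IsRep8 rc)
    (hnb : ¬NRep (5 : ℚ_[2]) rb) (hnc : ¬NRep (5 : ℚ_[2]) rc) :
    NRep (5 : ℚ_[2]) (rb * rc) := by
  have w1 : NRep (5 : ℚ_[2]) 1 := rep_congr (rep_sq _ 1) (by norm_num)
  have w5 : NRep (5 : ℚ_[2]) (5) := ⟨2, 5, by norm_num⟩
  have wm1 : NRep (5 : ℚ_[2]) (-1) := ⟨1, 2, by norm_num⟩
  have wm5 : NRep (5 : ℚ_[2]) (-5) := rep_congr (rep_mul w5 wm1) (by norm_num)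
  rcases hrb with rfl | rfl | rfl | rfl | rfl | rfl | rfl | rfl
  · exact absurd w1 hnb
  · exact absurd wm1 hnb
  · exact absurd w5 hnb
  · exact absurd wm5 hnb
  · rcases hrc with rfl | rfl | rfl | rfl | rfl | rfl | rfl | rfl
    · exact absurd w1 hnc
    · exact absurd wm1 hnc
    · exact absurd w5 hnc
    · exact absurd wm5 hnc
    · exact rep_congr (rep_mul_sq ((2 : ℚ_[2])) w1) (by norm_num)
    · exact rep_congr (rep_mul_sq ((2 : ℚ_[2])) wm1) (by norm_num)
    · exact rep_congr (rep_mul_sq ((2 : ℚ_[2])) w5) (by norm_num)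
    · exact rep_congr (rep_mul_sq ((2 : ℚ_[2])) wm5) (by norm_num)
  · rcases hrc with rfl | rfl | rfl | rfl | rfl | rfl | rfl | rfl
    · exact absurd w1 hnc
    · exact absurd wm1 hnc
    · exact absurd w5 hnc
    · exact absurd wm5 hnc
    · exact rep_congr (rep_mul_sq ((2 : ℚ_[2])) wm1) (by norm_num)
    · exact rep_congr (rep_mul_sq ((2 : ℚ_[2])) w1) (by norm_num)
    · exact rep_congr (rep_mul_sq ((2 : ℚ_[2])) wm5) (by norm_num)
    · exact rep_congr (rep_mul_sq ((2 : ℚ_[2])) w5) (by norm_num)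
  · rcases hrc with rfl | rfl | rfl | rfl | rfl | rfl | rfl | rfl
    · exact absurd w1 hnc
    · exact absurd wm1 hnc
    · exact absurd w5 hnc
    · exact absurd wm5 hnc
    · exact rep_congr (rep_mul_sq ((2 : ℚ_[2])) w5) (by norm_num)
    · exact rep_congr (rep_mul_sq ((2 : ℚ_[2])) wm5) (by norm_num)
    · exact rep_congr (rep_mul_sq ((10 : ℚ_[2])) w1) (by norm_num)
    · exact rep_congr (rep_mul_sq ((10 : ℚ_[2])) wm1) (by norm_num)
  · rcases hrc with rfl | rfl | rfl | rfl | rfl | rfl | rfl | rfl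
    · exact absurd w1 hnc
    · exact absurd wm1 hnc
    · exact absurd w5 hnc
    · exact absurd wm5 hnc
    · exact rep_congr (rep_mul_sq ((2 : ℚ_[2])) wm5) (by norm_num)
    · exact rep_congr (rep_mul_sq ((2 : ℚ_[2])) w5) (by norm_num)
    · exact rep_congr (rep_mul_sq ((10 : ℚ_[2])) wm1) (by norm_num)
    · exact rep_congr (rep_mul_sq ((10 : ℚ_[2])) w1) (by norm_num)

theorem core2_m5 (rb rc : ℚ_[2]) (hrb : IsRep8 rb) (hrc : IsRep8 rc)
    (hnb : ¬NRep (-5 : ℚ_[2]) rb) (hnc : ¬NRep (-5 : ℚ_[2]) rc) :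
    NRep (-5 : ℚ_[2]) (rb * rc) := by
  obtain ⟨s7, hs7⟩ := sqrtm7
  have w1 : NRep (-5 : ℚ_[2]) 1 := rep_congr (rep_sq _ 1) (by norm_num)
  have w5 : NRep (-5 : ℚ_[2]) (5) := rep_congr (rep_neg_a (-5 : ℚ_[2])) (by norm_num)
  have wm2 : NRep (-5 : ℚ_[2]) (-2) := ⟨1, s7, by rw [hs7]; norm_num⟩
  have wm10 : NRep (-5 : ℚ_[2]) (-10) := rep_congr (rep_mul w5 wm2) (by norm_num)
  rcases hrb with rfl | rfl | rfl | rfl | rfl | rfl | rfl | rfl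
  · exact absurd w1 hnb
  · rcases hrc with rfl | rfl | rfl | rfl | rfl | rfl | rfl | rfl
    · exact absurd w1 hnc
    · exact rep_congr (rep_mul_sq ((1 : ℚ_[2])) w1) (by norm_num)
    · exact absurd w5 hnc
    · exact rep_congr (rep_mul_sq ((1 : ℚ_[2])) w5) (by norm_num)
    · exact rep_congr (rep_mul_sq ((1 : ℚ_[2])) wm2) (by norm_num)
    · exact absurd wm2 hnc
    · exact rep_congr (rep_mul_sq ((1 : ℚ_[2])) wm10) (by norm_num)
    · exact absurd wm10 hnc
  · exact absurd w5 hnb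
  · rcases hrc with rfl | rfl | rfl | rfl | rfl | rfl | rfl | rfl
    · exact absurd w1 hnc
    · exact rep_congr (rep_mul_sq ((1 : ℚ_[2])) w5) (by norm_num)
    · exact absurd w5 hnc
    · exact rep_congr (rep_mul_sq ((5 : ℚ_[2])) w1) (by norm_num)
    · exact rep_congr (rep_mul_sq ((1 : ℚ_[2])) wm10) (by norm_num)
    · exact absurd wm2 hnc
    · exact rep_congr (rep_mul_sq ((5 : ℚ_[2])) wm2) (by norm_num)
    · exact absurd wm10 hnc
  · rcases hrc with rfl | rfl | rfl | rfl | rfl | rfl | rfl | rfl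
    · exact absurd w1 hnc
    · exact rep_congr (rep_mul_sq ((1 : ℚ_[2])) wm2) (by norm_num)
    · exact absurd w5 hnc
    · exact rep_congr (rep_mul_sq ((1 : ℚ_[2])) wm10) (by norm_num)
    · exact rep_congr (rep_mul_sq ((2 : ℚ_[2])) w1) (by norm_num)
    · exact absurd wm2 hnc
    · exact rep_congr (rep_mul_sq ((2 : ℚ_[2])) w5) (by norm_num)
    · exact absurd wm10 hnc
  · exact absurd wm2 hnb
  · rcases hrc with rfl | rfl | rfl | rfl | rfl | rfl | rfl | rfl
    · exact absurd w1 hnc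
    · exact rep_congr (rep_mul_sq ((1 : ℚ_[2])) wm10) (by norm_num)
    · exact absurd w5 hnc
    · exact rep_congr (rep_mul_sq ((5 : ℚ_[2])) wm2) (by norm_num)
    · exact rep_congr (rep_mul_sq ((2 : ℚ_[2])) w5) (by norm_num)
    · exact absurd wm2 hnc
    · exact rep_congr (rep_mul_sq ((10 : ℚ_[2])) w1) (by norm_num)
    · exact absurd wm10 hnc
  · exact absurd wm10 hnb

theorem core2_p2 (rb rc : ℚ_[2]) (hrb : IsRep8 rb) (hrc : IsRep8 rc)
    (hnb : ¬NRep (2 : ℚ_[2]) rb) (hnc : ¬NRep (2 : ℚ_[2]) rc) :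
    NRep (2 : ℚ_[2]) (rb * rc) := by
  have w1 : NRep (2 : ℚ_[2]) 1 := rep_congr (rep_sq _ 1) (by norm_num)
  have wm1 : NRep (2 : ℚ_[2]) (-1) := ⟨1, 1, by norm_num⟩
  have w2 : NRep (2 : ℚ_[2]) (2) := ⟨1, 2, by norm_num⟩
  have wm2 : NRep (2 : ℚ_[2]) (-2) := rep_congr (rep_mul wm1 w2) (by norm_num)
  rcases hrb with rfl | rfl | rfl | rfl | rfl | rfl | rfl | rfl
  · exact absurd w1 hnb
  · exact absurd wm1 hnb
  · rcases hrc with rfl | rfl | rfl | rfl | rfl | rfl | rfl | rfl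
    · exact absurd w1 hnc
    · exact absurd wm1 hnc
    · exact rep_congr (rep_mul_sq ((5 : ℚ_[2])) w1) (by norm_num)
    · exact rep_congr (rep_mul_sq ((5 : ℚ_[2])) wm1) (by norm_num)
    · exact absurd w2 hnc
    · exact absurd wm2 hnc
    · exact rep_congr (rep_mul_sq ((5 : ℚ_[2])) w2) (by norm_num)
    · exact rep_congr (rep_mul_sq ((5 : ℚ_[2])) wm2) (by norm_num)
  · rcases hrc with rfl | rfl | rfl | rfl | rfl | rfl | rfl | rfl
    · exact absurd w1 hnc
    · exact absurd wm1 hnc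
    · exact rep_congr (rep_mul_sq ((5 : ℚ_[2])) wm1) (by norm_num)
    · exact rep_congr (rep_mul_sq ((5 : ℚ_[2])) w1) (by norm_num)
    · exact absurd w2 hnc
    · exact absurd wm2 hnc
    · exact rep_congr (rep_mul_sq ((5 : ℚ_[2])) wm2) (by norm_num)
    · exact rep_congr (rep_mul_sq ((5 : ℚ_[2])) w2) (by norm_num)
  · exact absurd w2 hnb
  · exact absurd wm2 hnb
  · rcases hrc with rfl | rfl | rfl | rfl | rfl | rfl | rfl | rfl
    · exact absurd w1 hnc
    · exact absurd wm1 hnc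
    · exact rep_congr (rep_mul_sq ((5 : ℚ_[2])) w2) (by norm_num)
    · exact rep_congr (rep_mul_sq ((5 : ℚ_[2])) wm2) (by norm_num)
    · exact absurd w2 hnc
    · exact absurd wm2 hnc
    · exact rep_congr (rep_mul_sq ((10 : ℚ_[2])) w1) (by norm_num)
    · exact rep_congr (rep_mul_sq ((10 : ℚ_[2])) wm1) (by norm_num)
  · rcases hrc with rfl | rfl | rfl | rfl | rfl | rfl | rfl | rfl
    · exact absurd w1 hnc
    · exact absurd wm1 hnc
    · exact rep_congr (rep_mul_sq ((5 : ℚ_[2])) wm2) (by norm_num)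
    · exact rep_congr (rep_mul_sq ((5 : ℚ_[2])) w2) (by norm_num)
    · exact absurd w2 hnc
    · exact absurd wm2 hnc
    · exact rep_congr (rep_mul_sq ((10 : ℚ_[2])) wm1) (by norm_num)
    · exact rep_congr (rep_mul_sq ((10 : ℚ_[2])) w1) (by norm_num)

theorem core2_m2 (rb rc : ℚ_[2]) (hrb : IsRep8 rb) (hrc : IsRep8 rc)
    (hnb : ¬NRep (-2 : ℚ_[2]) rb) (hnc : ¬NRep (-2 : ℚ_[2]) rc) :
    NRep (-2 : ℚ_[2]) (rb * rc) := by
  obtain ⟨s7, hs7⟩ := sqrtm7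
  have w1 : NRep (-2 : ℚ_[2]) 1 := rep_congr (rep_sq _ 1) (by norm_num)
  have w2 : NRep (-2 : ℚ_[2]) (2) := rep_congr (rep_neg_a (-2 : ℚ_[2])) (by norm_num)
  have wm5 : NRep (-2 : ℚ_[2]) (-5) := ⟨1, s7, by rw [hs7]; norm_num⟩
  have wm10 : NRep (-2 : ℚ_[2]) (-10) := rep_congr (rep_mul w2 wm5) (by norm_num)
  rcases hrb with rfl | rfl | rfl | rfl | rfl | rfl | rfl | rfl
  · exact absurd w1 hnb
  · rcases hrc with rfl | rfl | rfl | rfl | rfl | rfl | rfl | rfl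
    · exact absurd w1 hnc
    · exact rep_congr (rep_mul_sq ((1 : ℚ_[2])) w1) (by norm_num)
    · exact rep_congr (rep_mul_sq ((1 : ℚ_[2])) wm5) (by norm_num)
    · exact absurd wm5 hnc
    · exact absurd w2 hnc
    · exact rep_congr (rep_mul_sq ((1 : ℚ_[2])) w2) (by norm_num)
    · exact rep_congr (rep_mul_sq ((1 : ℚ_[2])) wm10) (by norm_num)
    · exact absurd wm10 hnc
  · rcases hrc with rfl | rfl | rfl | rfl | rfl | rfl | rfl | rfl
    · exact absurd w1 hnc
    · exact rep_congr (rep_mul_sq ((1 : ℚ_[2])) wm5) (by norm_num)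
    · exact rep_congr (rep_mul_sq ((5 : ℚ_[2])) w1) (by norm_num)
    · exact absurd wm5 hnc
    · exact absurd w2 hnc
    · exact rep_congr (rep_mul_sq ((1 : ℚ_[2])) wm10) (by norm_num)
    · exact rep_congr (rep_mul_sq ((5 : ℚ_[2])) w2) (by norm_num)
    · exact absurd wm10 hnc
  · exact absurd wm5 hnb
  · exact absurd w2 hnb
  · rcases hrc with rfl | rfl | rfl | rfl | rfl | rfl | rfl | rfl
    · exact absurd w1 hnc
    · exact rep_congr (rep_mul_sq ((1 : ℚ_[2])) w2) (by norm_num)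
    · exact rep_congr (rep_mul_sq ((1 : ℚ_[2])) wm10) (by norm_num)
    · exact absurd wm5 hnc
    · exact absurd w2 hnc
    · exact rep_congr (rep_mul_sq ((2 : ℚ_[2])) w1) (by norm_num)
    · exact rep_congr (rep_mul_sq ((2 : ℚ_[2])) wm5) (by norm_num)
    · exact absurd wm10 hnc
  · rcases hrc with rfl | rfl | rfl | rfl | rfl | rfl | rfl | rfl
    · exact absurd w1 hnc
    · exact rep_congr (rep_mul_sq ((1 : ℚ_[2])) wm10) (by norm_num)
    · exact rep_congr (rep_mul_sq ((5 : ℚ_[2])) w2) (by norm_num)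
    · exact absurd wm5 hnc
    · exact absurd w2 hnc
    · exact rep_congr (rep_mul_sq ((2 : ℚ_[2])) wm5) (by norm_num)
    · exact rep_congr (rep_mul_sq ((10 : ℚ_[2])) w1) (by norm_num)
    · exact absurd wm10 hnc
  · exact absurd wm10 hnb

theorem core2_p10 (rb rc : ℚ_[2]) (hrb : IsRep8 rb) (hrc : IsRep8 rc)
    (hnb : ¬NRep (10 : ℚ_[2]) rb) (hnc : ¬NRep (10 : ℚ_[2]) rc) :
    NRep (10 : ℚ_[2]) (rb * rc) := by
  have w1 : NRep (10 : ℚ_[2]) 1 := rep_congr (rep_sq _ 1) (by norm_num)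
  have wm1 : NRep (10 : ℚ_[2]) (-1) := ⟨1, 3, by norm_num⟩
  have wm10 : NRep (10 : ℚ_[2]) (-10) := rep_congr (rep_neg_a (10 : ℚ_[2])) (by norm_num)
  have w10 : NRep (10 : ℚ_[2]) (10) := rep_congr (rep_mul wm1 wm10) (by norm_num)
  rcases hrb with rfl | rfl | rfl | rfl | rfl | rfl | rfl | rfl
  · exact absurd w1 hnb
  · exact absurd wm1 hnb
  · rcases hrc with rfl | rfl | rfl | rfl | rfl | rfl | rfl | rfl
    · exact absurd w1 hnc
    · exact absurd wm1 hnc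
    · exact rep_congr (rep_mul_sq ((5 : ℚ_[2])) w1) (by norm_num)
    · exact rep_congr (rep_mul_sq ((5 : ℚ_[2])) wm1) (by norm_num)
    · exact rep_congr (rep_mul_sq ((1 : ℚ_[2])) w10) (by norm_num)
    · exact rep_congr (rep_mul_sq ((1 : ℚ_[2])) wm10) (by norm_num)
    · exact absurd w10 hnc
    · exact absurd wm10 hnc
  · rcases hrc with rfl | rfl | rfl | rfl | rfl | rfl | rfl | rfl
    · exact absurd w1 hnc
    · exact absurd wm1 hnc
    · exact rep_congr (rep_mul_sq ((5 : ℚ_[2])) wm1) (by norm_num)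
    · exact rep_congr (rep_mul_sq ((5 : ℚ_[2])) w1) (by norm_num)
    · exact rep_congr (rep_mul_sq ((1 : ℚ_[2])) wm10) (by norm_num)
    · exact rep_congr (rep_mul_sq ((1 : ℚ_[2])) w10) (by norm_num)
    · exact absurd w10 hnc
    · exact absurd wm10 hnc
  · rcases hrc with rfl | rfl | rfl | rfl | rfl | rfl | rfl | rfl
    · exact absurd w1 hnc
    · exact absurd wm1 hnc
    · exact rep_congr (rep_mul_sq ((1 : ℚ_[2])) w10) (by norm_num)
    · exact rep_congr (rep_mul_sq ((1 : ℚ_[2])) wm10) (by norm_num)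
    · exact rep_congr (rep_mul_sq ((2 : ℚ_[2])) w1) (by norm_num)
    · exact rep_congr (rep_mul_sq ((2 : ℚ_[2])) wm1) (by norm_num)
    · exact absurd w10 hnc
    · exact absurd wm10 hnc
  · rcases hrc with rfl | rfl | rfl | rfl | rfl | rfl | rfl | rfl
    · exact absurd w1 hnc
    · exact absurd wm1 hnc
    · exact rep_congr (rep_mul_sq ((1 : ℚ_[2])) wm10) (by norm_num)
    · exact rep_congr (rep_mul_sq ((1 : ℚ_[2])) w10) (by norm_num)
    · exact rep_congr (rep_mul_sq ((2 : ℚ_[2])) wm1) (by norm_num)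
    · exact rep_congr (rep_mul_sq ((2 : ℚ_[2])) w1) (by norm_num)
    · exact absurd w10 hnc
    · exact absurd wm10 hnc
  · exact absurd w10 hnb
  · exact absurd wm10 hnb

theorem core2_m10 (rb rc : ℚ_[2]) (hrb : IsRep8 rb) (hrc : IsRep8 rc)
    (hnb : ¬NRep (-10 : ℚ_[2]) rb) (hnc : ¬NRep (-10 : ℚ_[2]) rc) :
    NRep (-10 : ℚ_[2]) (rb * rc) := by
  obtain ⟨s15, hs15⟩ := sqrtm15
  have w1 : NRep (-10 : ℚ_[2]) 1 := rep_congr (rep_sq _ 1) (by norm_num)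
  have w10 : NRep (-10 : ℚ_[2]) (10) := rep_congr (rep_neg_a (-10 : ℚ_[2])) (by norm_num)
  have wm5 : NRep (-10 : ℚ_[2]) (-5) := ⟨1, s15, by rw [hs15]; norm_num⟩
  have wm2 : NRep (-10 : ℚ_[2]) (-2) := rep_congr (rep_mul_sq (5⁻¹ : ℚ_[2]) (rep_mul w10 wm5)) (by norm_num)
  rcases hrb with rfl | rfl | rfl | rfl | rfl | rfl | rfl | rfl
  · exact absurd w1 hnb
  · rcases hrc with rfl | rfl | rfl | rfl | rfl | rfl | rfl | rfl
    · exact absurd w1 hnc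
    · exact rep_congr (rep_mul_sq ((1 : ℚ_[2])) w1) (by norm_num)
    · exact rep_congr (rep_mul_sq ((1 : ℚ_[2])) wm5) (by norm_num)
    · exact absurd wm5 hnc
    · exact rep_congr (rep_mul_sq ((1 : ℚ_[2])) wm2) (by norm_num)
    · exact absurd wm2 hnc
    · exact absurd w10 hnc
    · exact rep_congr (rep_mul_sq ((1 : ℚ_[2])) w10) (by norm_num)
  · rcases hrc with rfl | rfl | rfl | rfl | rfl | rfl | rfl | rfl
    · exact absurd w1 hnc
    · exact rep_congr (rep_mul_sq ((1 : ℚ_[2])) wm5) (by norm_num)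
    · exact rep_congr (rep_mul_sq ((5 : ℚ_[2])) w1) (by norm_num)
    · exact absurd wm5 hnc
    · exact rep_congr (rep_mul_sq ((1 : ℚ_[2])) w10) (by norm_num)
    · exact absurd wm2 hnc
    · exact absurd w10 hnc
    · exact rep_congr (rep_mul_sq ((5 : ℚ_[2])) wm2) (by norm_num)
  · exact absurd wm5 hnb
  · rcases hrc with rfl | rfl | rfl | rfl | rfl | rfl | rfl | rfl
    · exact absurd w1 hnc
    · exact rep_congr (rep_mul_sq ((1 : ℚ_[2])) wm2) (by norm_num)
    · exact rep_congr (rep_mul_sq ((1 : ℚ_[2])) w10) (by norm_num)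
    · exact absurd wm5 hnc
    · exact rep_congr (rep_mul_sq ((2 : ℚ_[2])) w1) (by norm_num)
    · exact absurd wm2 hnc
    · exact absurd w10 hnc
    · exact rep_congr (rep_mul_sq ((2 : ℚ_[2])) wm5) (by norm_num)
  · exact absurd wm2 hnb
  · exact absurd w10 hnb
  · rcases hrc with rfl | rfl | rfl | rfl | rfl | rfl | rfl | rfl
    · exact absurd w1 hnc
    · exact rep_congr (rep_mul_sq ((1 : ℚ_[2])) w10) (by norm_num)
    · exact rep_congr (rep_mul_sq ((5 : ℚ_[2])) wm2) (by norm_num)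
    · exact absurd wm5 hnc
    · exact rep_congr (rep_mul_sq ((2 : ℚ_[2])) wm5) (by norm_num)
    · exact absurd wm2 hnc
    · exact absurd w10 hnc
    · exact rep_congr (rep_mul_sq ((10 : ℚ_[2])) w1) (by norm_num)

theorem decomp2 (t : ℚ_[2]) (ht : t ≠ 0) :
    ∃ s r : ℚ_[2], s ≠ 0 ∧ IsRep8 r ∧ t = s ^ 2 * r := by
  obtain ⟨s, u, hs, hu, hd⟩ := exists_sq_unit t ht
  obtain ⟨r, σ, hr, hσ⟩ := unit2_decomp u hu
  have hσ0 : σ ≠ 0 := by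
    rintro rfl
    have h0 : (u : ℚ_[2]) = 0 := by rw [hσ]; ring
    exact coe_unit_ne_zero hu h0
  rcases hd with hd | hd
  · refine ⟨s * σ, r, mul_ne_zero hs hσ0, by rcases hr with rfl | rfl | rfl | rfl <;> simp [IsRep8], ?_⟩
    rw [hd, hσ]; ring
  · refine ⟨s * σ, 2 * r, mul_ne_zero hs hσ0, by rcases hr with rfl | rfl | rfl | rfl <;> norm_num [IsRep8], ?_⟩
    rw [hd, hσ]
    have : ((2 : ℕ) : ℚ_[2]) = (2 : ℚ_[2]) := by norm_num
    rw [this]; ring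

theorem main_two (a b c : ℚ_[2]) (ha : a ≠ 0) (hb : b ≠ 0) (hc : c ≠ 0)
    (hnb : ¬NRep a b) (hnc : ¬NRep a c) : NRep a (b * c) := by
  obtain ⟨sa, ra, hsa, hra, hdea⟩ := decomp2 a ha
  obtain ⟨sb, rb, hsb, hrb, hdeb⟩ := decomp2 b hb
  obtain ⟨sc, rc, hsc, hrc, hdec⟩ := decomp2 c hc
  have trans : ∀ x, NRep ra x → NRep a x := fun x h => rep_of_eq_sq_mul hsa hdea h
  have hnb' : ¬NRep ra rb := fun h =>
    hnb (trans b (rep_congr (rep_mul_sq sb h) (by rw [hdeb]; ring)))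
  have hnc' : ¬NRep ra rc := fun h =>
    hnc (trans c (rep_congr (rep_mul_sq sc h) (by rw [hdec]; ring)))
  have key : NRep ra (rb * rc) := by
    rcases hra with rfl | rfl | rfl | rfl | rfl | rfl | rfl | rfl
    · exact absurd (rep_of_isSquare one_ne_zero ⟨1, (mul_one 1).symm⟩ rb) hnb'
    · exact core2_m1 rb rc hrb hrc hnb' hnc'
    · exact core2_p5 rb rc hrb hrc hnb' hnc'
    · exact core2_m5 rb rc hrb hrc hnb' hnc'
    · exact core2_p2 rb rc hrb hrc hnb' hnc'
    · exact core2_m2 rb rc hrb hrc hnb' hnc'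
    · exact core2_p10 rb rc hrb hrc hnb' hnc'
    · exact core2_m10 rb rc hrb hrc hnb' hnc'
  exact trans _ (rep_congr (rep_mul_sq (sb * sc) key) (by rw [hdeb, hdec]; ring))

theorem main_rep {q : ℕ} [Fact q.Prime] (a b c : ℚ_[q]) (ha : a ≠ 0) (hb : b ≠ 0) (hc : c ≠ 0)
    (hnb : ¬NRep a b) (hnc : ¬NRep a c) : NRep a (b * c) := by
  by_cases hq : q = 2
  · subst hq
    exact main_two a b c ha hb hc hnb hnc
  · exact main_odd hq a b c ha hb hc hnb hnc


/-- Multiplicativity of the Hilbert symbol: `(a,b)_q (a,c)_q = (a,bc)_q`. -/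
theorem hilbert_symbol_multiplicative {q : ℕ} [Fact q.Prime] (a b c : ℚ_[q])
    (ha : a ≠ 0) (hb : b ≠ 0) (hc : c ≠ 0) :
    QSolvable a (b * c) ↔ (QSolvable a b ↔ QSolvable a c) := by
  rw [qsolvable_iff_rep ha (mul_ne_zero hb hc), qsolvable_iff_rep ha hb, qsolvable_iff_rep ha hc]
  constructor
  · intro h
    constructor
    · intro hbrep
      exact rep_cancel hb hbrep h
    · intro hcrep
      exact rep_cancel hc hcrep (rep_congr h (mul_comm b c))
  · intro h
    by_cases hrb : NRep a b
    · exact rep_mul hrb (h.mp hrb)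
    · exact main_rep a b c ha hb hc hrb (fun hc' => hrb (h.mpr hc'))
end

section
/- Let f and g be nondegenerate quadratic forms on finite-dimensional ℚ-vector spaces. Then f and g are projectively equivalent if and only if the orthogonal direct sums f ⊕ ⟨1,−1⟩ and g ⊕ ⟨1,−1⟩ are projectively equivalent, where ⟨1,−1⟩ denotes the quadratic form (s, t) ↦ s² − t² on ℚ². -/
/-- Two quadratic forms over a commutative ring are equivalent if there is an invertible
linear map `C` between their underlying spaces with `f (C v) = g v` for all `v`. -/
def QFEquiv {R V W : Type*} [CommRing R] [AddCommGroup V] [Module R V]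
    [AddCommGroup W] [Module R W] (f : QuadraticForm R V) (g : QuadraticForm R W) : Prop :=
  ∃ C : W ≃ₗ[R] V, ∀ v : W, f (C v) = g v

/-- Two rational quadratic forms are projectively equivalent if some positive rational
multiple of the first is equivalent to the second. -/
def ProjEquiv {V W : Type*} [AddCommGroup V] [Module ℚ V] [AddCommGroup W] [Module ℚ W]
    (f : QuadraticForm ℚ V) (g : QuadraticForm ℚ W) : Prop :=
  ∃ m : ℚ, 0 < m ∧ QFEquiv (m • f) g

/-- The quadratic form `⟨1, -1⟩ : (s, t) ↦ s² − t²` on `ℚ²`. -/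
noncomputable def hypForm : QuadraticForm ℚ (ℚ × ℚ) :=
  QuadraticMap.prod QuadraticMap.sq (-QuadraticMap.sq)

section Aux

open QuadraticMap

variable {V W X : Type*} [AddCommGroup V] [Module ℚ V] [AddCommGroup W] [Module ℚ W]
  [AddCommGroup X] [Module ℚ X]

theorem qfEquiv_refl (f : QuadraticForm ℚ V) : QFEquiv f f :=
  ⟨LinearEquiv.refl ℚ V, fun _ => rfl⟩

theorem qfEquiv_symm {f : QuadraticForm ℚ V} {g : QuadraticForm ℚ W}
    (h : QFEquiv f g) : QFEquiv g f := by
  obtain ⟨C, hC⟩ := h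
  exact ⟨C.symm, fun v => by rw [← hC (C.symm v), C.apply_symm_apply]⟩

theorem qfEquiv_trans {f : QuadraticForm ℚ V} {g : QuadraticForm ℚ W} {h : QuadraticForm ℚ X}
    (h1 : QFEquiv f g) (h2 : QFEquiv g h) : QFEquiv f h := by
  obtain ⟨C, hC⟩ := h1
  obtain ⟨D, hD⟩ := h2
  exact ⟨D.trans C, fun v => by simp [LinearEquiv.trans_apply, hC, hD]⟩

theorem qfEquiv_prod {f₁ : QuadraticForm ℚ V} {f₂ g₂ : QuadraticForm ℚ (ℚ × ℚ)}
    {g₁ : QuadraticForm ℚ W} (h1 : QFEquiv f₁ g₁) (h2 : QFEquiv f₂ g₂) :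
    QFEquiv (f₁.prod f₂) (g₁.prod g₂) := by
  obtain ⟨C, hC⟩ := h1
  obtain ⟨D, hD⟩ := h2
  exact ⟨C.prodCongr D, fun v => by simp [QuadraticMap.prod_apply, LinearEquiv.prodCongr_apply, hC, hD]⟩

theorem q_add (Q : QuadraticForm ℚ V) (x y : V) :
    Q (x + y) = Q x + Q y + polar Q x y := by
  simp only [polar]; ring

theorem polar_self' (Q : QuadraticForm ℚ V) (x : V) : polar Q x x = 2 * Q x := by
  have : x + x = (2 : ℚ) • x := by rw [two_smul]
  simp only [polar, this, QuadraticMap.map_smul, smul_eq_mul]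
  ring

theorem q_sub_smul (Q : QuadraticForm ℚ V) (x u : V) (c : ℚ) :
    Q (x - c • u) = Q x - c * polar Q x u + c ^ 2 * Q u := by
  have h1 : x - c • u = x + (-c) • u := by rw [neg_smul, sub_eq_add_neg]
  rw [h1, q_add, QuadraticMap.map_smul, polar_smul_right, smul_eq_mul, smul_eq_mul]
  ring

/-- A reflection: the isometry `x ↦ x - (polar Q x u / Q u) • u`. -/
theorem exists_isometry_reflect (Q : QuadraticForm ℚ V) (u : V) (hu : Q u ≠ 0) :
    ∃ e : V ≃ₗ[ℚ] V, (∀ x, Q (e x) = Q x) ∧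
      (∀ x, e x = x - ((Q u)⁻¹ * polar Q x u) • u) := by
  set T : V →ₗ[ℚ] V :=
    LinearMap.id - (((Q u)⁻¹ • (polarBilin Q).flip u).smulRight u) with hT
  have hTx : ∀ x, T x = x - ((Q u)⁻¹ * polar Q x u) • u := by
    intro x
    simp [hT, LinearMap.sub_apply, LinearMap.smulRight_apply, LinearMap.smul_apply,
      polarBilin_apply_apply, smul_smul]
  have hinv : Function.Involutive T := by
    intro x
    rw [hTx, hTx, polar_sub_left, polar_smul_left, polar_self', smul_eq_mul]
    have : (Q u)⁻¹ * (polar Q x u - (Q u)⁻¹ * polar Q x u * (2 * Q u)) =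
        -((Q u)⁻¹ * polar Q x u) := by field_simp; ring
    rw [this, neg_smul, sub_neg_eq_add, sub_add_cancel]
  refine ⟨LinearEquiv.ofInvolutive T hinv, fun x => ?_, fun x => hTx x⟩
  show Q (T x) = Q x
  rw [hTx, q_sub_smul]
  field_simp
  ring

/-- If `Q v = Q w ≠ 0`, then some isometry of `Q` takes `v` to `w`. -/
theorem exists_isometry_map_eq (Q : QuadraticForm ℚ V) (v w : V) (hvw : Q v = Q w)
    (hv : Q v ≠ 0) : ∃ e : V ≃ₗ[ℚ] V, (∀ x, Q (e x) = Q x) ∧ e v = w := by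
  have hsub : Q (v - w) = 2 * Q v - polar Q v w := by
    have := q_sub_smul Q v w 1
    rw [one_smul] at this
    rw [this, hvw]; ring
  have hadd : Q (v + w) = 2 * Q v + polar Q v w := by
    rw [q_add, hvw]; ring
  by_cases h : Q (v - w) ≠ 0
  · obtain ⟨e, he, hfor⟩ := exists_isometry_reflect Q (v - w) h
    refine ⟨e, he, ?_⟩
    rw [hfor v]
    have hpol : polar Q v (v - w) = 2 * Q v - polar Q v w := by
      rw [polar_sub_right, polar_self']
    rw [hpol, ← hsub, inv_mul_cancel₀ h, one_smul]
    abel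
  · push_neg at h
    have h' : Q (v + w) ≠ 0 := by
      rw [hadd]; rw [hsub] at h
      intro h2
      apply hv
      linarith
    obtain ⟨e, he, hfor⟩ := exists_isometry_reflect Q (v + w) h'
    refine ⟨e.trans (LinearEquiv.neg ℚ), fun x => ?_, ?_⟩
    · simp only [LinearEquiv.trans_apply, LinearEquiv.neg_apply, QuadraticMap.map_neg]
      exact he x
    · simp only [LinearEquiv.trans_apply, LinearEquiv.neg_apply]
      rw [hfor v]
      have hpol : polar Q v (v + w) = 2 * Q v + polar Q v w := by
        rw [polar_add_right, polar_self']
      rw [hpol, ← hadd, inv_mul_cancel₀ h', one_smul]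
      abel

theorem q_rank_one (A : QuadraticForm ℚ ℚ) (s : ℚ) : A s = s * s * A 1 := by
  conv_lhs => rw [show s = s • (1 : ℚ) by simp]
  rw [QuadraticMap.map_smul, smul_eq_mul]

theorem polar_rank_one (A : QuadraticForm ℚ ℚ) (s : ℚ) : polar A s 1 = 2 * s * A 1 := by
  simp only [polar]
  rw [q_rank_one A (s + 1), q_rank_one A s]
  ring

/-- Witt cancellation of a one-dimensional form. -/
theorem qfEquiv_cancel (F₁ : QuadraticForm ℚ V) (F₂ : QuadraticForm ℚ W)
    (A : QuadraticForm ℚ ℚ) (hA : A 1 ≠ 0)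
    (h : QFEquiv (F₁.prod A) (F₂.prod A)) : QFEquiv F₁ F₂ := by
  obtain ⟨C, hC⟩ := h
  set Q : QuadraticForm ℚ (V × ℚ) := F₁.prod A with hQ
  set v : V × ℚ := C (0, 1) with hv
  set w : V × ℚ := ((0 : V), (1 : ℚ)) with hw
  have hQv : Q v = A 1 := by
    rw [hv, hC]
    simp [QuadraticMap.prod_apply]
  have hQw : Q w = A 1 := by simp [hQ, hw, QuadraticMap.prod_apply]
  obtain ⟨e, he, hev⟩ := exists_isometry_map_eq Q v w (by rw [hQv, hQw]) (by rwa [hQv])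
  set D : (W × ℚ) ≃ₗ[ℚ] (V × ℚ) := C.trans e with hD
  have hDiso : ∀ p, Q (D p) = (F₂.prod A) p := fun p => by
    rw [hD, LinearEquiv.trans_apply, he, hC]
  have hD01 : D ((0 : W), (1 : ℚ)) = w := by rw [hD, LinearEquiv.trans_apply, ← hv, hev]
  have hDpolar : ∀ p q, polar Q (D p) (D q) = polar (F₂.prod A) p q := fun p q => by
    simp only [polar, ← map_add, hDiso]
  -- D maps W × {0} to V × {0}
  have hsnd : ∀ x : W, (D (x, 0)).2 = 0 := by
    intro x
    have h1 := hDpolar (x, 0) ((0 : W), (1 : ℚ))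
    rw [hD01, hQ, hw] at h1
    rw [QuadraticMap.polar_prod, QuadraticMap.polar_prod] at h1
    simp only [polar_zero_right, polar_zero_left, zero_add, add_zero] at h1
    rw [polar_rank_one] at h1
    have : (D (x, 0)).2 * A 1 = 0 := by linarith
    rcases mul_eq_zero.mp this with h2 | h2
    · exact h2
    · exact absurd h2 hA
  have hDsymm_iso : ∀ p : V × ℚ, (F₂.prod A) (D.symm p) = Q p := fun p => by
    conv_rhs => rw [show p = D (D.symm p) by rw [D.apply_symm_apply]]
    rw [hDiso]
  have hDsymm01 : D.symm w = ((0 : W), (1 : ℚ)) := by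
    rw [← hD01, D.symm_apply_apply]
  have hsymm_polar : ∀ p q, polar (F₂.prod A) (D.symm p) (D.symm q) = polar Q p q :=
    fun p q => by simp only [polar, ← map_add, hDsymm_iso]
  have hsnd' : ∀ y : V, (D.symm (y, 0)).2 = 0 := by
    intro y
    have h1 := hsymm_polar (y, 0) w
    rw [hDsymm01, hQ, hw] at h1
    rw [QuadraticMap.polar_prod, QuadraticMap.polar_prod] at h1
    simp only [polar_zero_right, polar_zero_left, zero_add, add_zero] at h1
    rw [polar_rank_one] at h1
    have : (D.symm (y, 0)).2 * A 1 = 0 := by linarith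
    rcases mul_eq_zero.mp this with h2 | h2
    · exact h2
    · exact absurd h2 hA
  -- the induced equivalence on the first factors
  set φ : W →ₗ[ℚ] V := (LinearMap.fst ℚ V ℚ) ∘ₗ (D : W × ℚ →ₗ[ℚ] V × ℚ) ∘ₗ
    (LinearMap.inl ℚ W ℚ) with hφ
  set ψ : V →ₗ[ℚ] W := (LinearMap.fst ℚ W ℚ) ∘ₗ (D.symm : V × ℚ →ₗ[ℚ] W × ℚ) ∘ₗ
    (LinearMap.inl ℚ V ℚ) with hψ
  have hφx : ∀ x : W, φ x = (D (x, 0)).1 := fun x => rfl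
  have hψy : ∀ y : V, ψ y = (D.symm (y, 0)).1 := fun y => rfl
  have hDfull : ∀ x : W, D (x, 0) = (φ x, 0) := fun x => by
    rw [hφx]; exact Prod.ext rfl (hsnd x)
  have hDsfull : ∀ y : V, D.symm (y, 0) = (ψ y, 0) := fun y => by
    rw [hψy]; exact Prod.ext rfl (hsnd' y)
  have hψφ : ∀ x : W, ψ (φ x) = x := by
    intro x
    have : D.symm (φ x, 0) = (x, 0) := by rw [← hDfull, D.symm_apply_apply]
    rw [hψy, ← hDfull, D.symm_apply_apply]
  have hφψ : ∀ y : V, φ (ψ y) = y := by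
    intro y
    rw [hφx, ← hDsfull, D.apply_symm_apply]
  refine ⟨LinearEquiv.ofLinear φ ψ (LinearMap.ext hφψ) (LinearMap.ext hψφ), fun x => ?_⟩
  show F₁ (φ x) = F₂ x
  have h1 : Q (φ x, 0) = F₂ x + A 0 := by rw [← hDfull, hDiso, QuadraticMap.prod_apply]
  rw [hQ, QuadraticMap.prod_apply] at h1
  simp only [map_zero, add_zero] at h1
  exact h1

theorem qfEquiv_assoc (F : QuadraticForm ℚ V) :
    QFEquiv (F.prod hypForm)
      ((F.prod (QuadraticMap.sq : QuadraticForm ℚ ℚ)).prod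
        (-(QuadraticMap.sq : QuadraticForm ℚ ℚ))) := by
  refine ⟨LinearEquiv.prodAssoc ℚ V ℚ ℚ, fun x => ?_⟩
  obtain ⟨⟨a, s⟩, t⟩ := x
  show (F.prod hypForm) (a, (s, t)) = _
  simp [QuadraticMap.prod_apply, hypForm, QuadraticMap.sq]
  ring

theorem smul_prod_eq (m : ℚ) (F : QuadraticForm ℚ V) (G : QuadraticForm ℚ (ℚ × ℚ)) :
    m • (F.prod G) = (m • F).prod (m • G) := by
  ext x
  simp [QuadraticMap.prod_apply, mul_add]

theorem hyp_scale (m : ℚ) (hm : m ≠ 0) : QFEquiv (m • hypForm) hypForm := by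
  have hval : ∀ x y : ℚ, hypForm (x, y) = x * x - y * y := by
    intro x y
    simp [hypForm, QuadraticMap.prod_apply, QuadraticMap.sq]
    ring
  set a : ℚ := (m⁻¹ + 1) / 2 with ha
  set b : ℚ := (m⁻¹ - 1) / 2 with hb
  have hab : a * a - b * b = m⁻¹ := by rw [ha, hb]; field_simp; ring
  set L : (ℚ × ℚ) →ₗ[ℚ] (ℚ × ℚ) := LinearMap.prod
    (a • LinearMap.fst ℚ ℚ ℚ + b • LinearMap.snd ℚ ℚ ℚ)
    (b • LinearMap.fst ℚ ℚ ℚ + a • LinearMap.snd ℚ ℚ ℚ) with hL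
  set L' : (ℚ × ℚ) →ₗ[ℚ] (ℚ × ℚ) := LinearMap.prod
    ((m * a) • LinearMap.fst ℚ ℚ ℚ + (-(m * b)) • LinearMap.snd ℚ ℚ ℚ)
    ((-(m * b)) • LinearMap.fst ℚ ℚ ℚ + (m * a) • LinearMap.snd ℚ ℚ ℚ) with hL'
  have happ : ∀ s t : ℚ, L (s, t) = (a * s + b * t, b * s + a * t) := by
    intro s t
    simp [hL, LinearMap.prod_apply, Pi.prod, smul_eq_mul]
  have happ' : ∀ s t : ℚ, L' (s, t) = (m * a * s + -(m * b) * t, -(m * b) * s + m * a * t) := by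
    intro s t
    simp [hL', LinearMap.prod_apply, Pi.prod, smul_eq_mul]
  have hLL' : L.comp L' = LinearMap.id := by
    apply LinearMap.ext
    rintro ⟨s, t⟩
    rw [LinearMap.comp_apply, happ', happ, LinearMap.id_apply]
    have e1 : a * (m * a * s + -(m * b) * t) + b * (-(m * b) * s + m * a * t) =
        (m * (a * a - b * b)) * s := by ring
    have e2 : b * (m * a * s + -(m * b) * t) + a * (-(m * b) * s + m * a * t) =
        (m * (a * a - b * b)) * t := by ring
    rw [Prod.ext_iff]
    refine ⟨?_, ?_⟩
    · rw [e1, hab]; field_simp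
    · rw [e2, hab]; field_simp
  have hL'L : L'.comp L = LinearMap.id := by
    apply LinearMap.ext
    rintro ⟨s, t⟩
    rw [LinearMap.comp_apply, happ, happ', LinearMap.id_apply]
    have e1 : m * a * (a * s + b * t) + -(m * b) * (b * s + a * t) =
        (m * (a * a - b * b)) * s := by ring
    have e2 : -(m * b) * (a * s + b * t) + m * a * (b * s + a * t) =
        (m * (a * a - b * b)) * t := by ring
    rw [Prod.ext_iff]
    refine ⟨?_, ?_⟩
    · rw [e1, hab]; field_simp
    · rw [e2, hab]; field_simp
  refine ⟨LinearEquiv.ofLinear L L' hLL' hL'L, fun p => ?_⟩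
  obtain ⟨s, t⟩ := p
  show (m • hypForm) (L (s, t)) = hypForm (s, t)
  have hsmul : ∀ p : ℚ × ℚ, (m • hypForm) p = m * hypForm p := fun p => by simp
  rw [happ, hsmul, hval, hval]
  have : m * ((a * s + b * t) * (a * s + b * t) - (b * s + a * t) * (b * s + a * t)) =
      (m * (a * a - b * b)) * (s * s - t * t) := by ring
  rw [this, hab]
  field_simp

end Aux

/-- Two nondegenerate rational quadratic forms are projectively equivalent iff their
orthogonal direct sums with `⟨1, −1⟩` are projectively equivalent. -/
theorem projEquiv_iff_projEquiv_add_hyperbolic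
    {V W : Type*} [AddCommGroup V] [Module ℚ V] [FiniteDimensional ℚ V]
    [AddCommGroup W] [Module ℚ W] [FiniteDimensional ℚ W]
    (f : QuadraticForm ℚ V) (g : QuadraticForm ℚ W)
    (hf : ∀ v, (∀ w, QuadraticMap.polar f v w = 0) → v = 0)
    (hg : ∀ v, (∀ w, QuadraticMap.polar g v w = 0) → v = 0) :
    ProjEquiv f g ↔ ProjEquiv (f.prod hypForm) (g.prod hypForm) := by
  constructor
  · rintro ⟨m, hm, hC⟩
    refine ⟨m, hm, ?_⟩
    rw [smul_prod_eq]
    exact qfEquiv_prod hC (hyp_scale m hm.ne')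
  · rintro ⟨m, hm, h⟩
    rw [smul_prod_eq] at h
    have h2 : QFEquiv ((m • f).prod hypForm) (g.prod hypForm) :=
      qfEquiv_trans (qfEquiv_prod (qfEquiv_refl (m • f)) (qfEquiv_symm (hyp_scale m hm.ne'))) h
    have h3 := qfEquiv_trans (qfEquiv_symm (qfEquiv_assoc (m • f)))
      (qfEquiv_trans h2 (qfEquiv_assoc g))
    have h4 := qfEquiv_cancel _ _ (-(QuadraticMap.sq : QuadraticForm ℚ ℚ))
      (by simp [QuadraticMap.sq]) h3
    have h5 := qfEquiv_cancel _ _ (QuadraticMap.sq : QuadraticForm ℚ ℚ)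
      (by simp [QuadraticMap.sq]) h4
    exact ⟨m, hm, h5⟩
end

section
/- Let J₁, J₂ : ℚ⁴ → ℚ⁴ be the linear maps given by the matrices J₁ = [[0,−1,0,0],[1,0,0,0],[0,0,0,−1],[0,0,1,0]] and J₂ = [[0,0,1,0],[0,0,0,−1],[−1,0,0,0],[0,1,0,0]]. If f is a quadratic form on ℚ⁴ with f(J₁·v) = f(v) and f(J₂·v) = f(v) for all v ∈ ℚ⁴, then there exists a ∈ ℚ such that f(x₁,x₂,x₃,x₄) = a·(x₁² + x₂² + x₃² + x₄²). -/
open Matrix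

/-- The matrix `J₁ = [[0,−1,0,0],[1,0,0,0],[0,0,0,−1],[0,0,1,0]]`. -/
def J₁ : Matrix (Fin 4) (Fin 4) ℚ :=
  !![0, -1, 0, 0; 1, 0, 0, 0; 0, 0, 0, -1; 0, 0, 1, 0]

/-- The matrix `J₂ = [[0,0,1,0],[0,0,0,−1],[−1,0,0,0],[0,1,0,0]]`. -/
def J₂ : Matrix (Fin 4) (Fin 4) ℚ :=
  !![0, 0, 1, 0; 0, 0, 0, -1; -1, 0, 0, 0; 0, 1, 0, 0]

/-- If a quadratic form `f(v) = vᵀ M v` on `ℚ⁴` (with `M` symmetric) is invariant under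
`J₁` and `J₂`, then `f = a·(x₁² + x₂² + x₃² + x₄²)` for some `a ∈ ℚ`. -/
theorem quaternionic_invariant_form_is_diagonal
    (M : Matrix (Fin 4) (Fin 4) ℚ) (hM : M.IsSymm)
    (f : (Fin 4 → ℚ) → ℚ) (hf : ∀ v, f v = v ⬝ᵥ M.mulVec v)
    (h1 : ∀ v, f (J₁.mulVec v) = f v) (h2 : ∀ v, f (J₂.mulVec v) = f v) :
    ∃ a : ℚ, ∀ v : Fin 4 → ℚ,
      f v = a * (v 0 ^ 2 + v 1 ^ 2 + v 2 ^ 2 + v 3 ^ 2) := by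
  have hs : ∀ i j : Fin 4, M j i = M i j := fun i j => congrFun (congrFun hM i) j
  have E1 := h1 ![1,0,0,0]
  have E2 := h2 ![1,0,0,0]
  have E3 := h1 ![0,0,1,0]
  have E4 := h1 ![1,1,0,0]
  have E5 := h1 ![0,0,1,1]
  have E6 := h2 ![1,0,1,0]
  have E7 := h1 ![1,0,1,0]
  have E8 := h1 ![1,0,0,1]
  have E9 := h2 ![1,0,0,1]
  simp only [hf] at E1 E2 E3 E4 E5 E6 E7 E8 E9
  simp [J₁, J₂, Matrix.mulVec, dotProduct, Fin.sum_univ_four,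
    Matrix.vecHead, Matrix.vecTail] at E1 E2 E3 E4 E5 E6 E7 E8 E9
  have d1 : M 1 1 = M 0 0 := by linarith [hs 0 1, hs 0 2, hs 0 3, hs 1 2, hs 1 3, hs 2 3]
  have d2 : M 2 2 = M 0 0 := by linarith [hs 0 1, hs 0 2, hs 0 3, hs 1 2, hs 1 3, hs 2 3]
  have d3 : M 3 3 = M 0 0 := by linarith [hs 0 1, hs 0 2, hs 0 3, hs 1 2, hs 1 3, hs 2 3]
  have k01 : M 0 1 = 0 := by linarith [hs 0 1]
  have k23 : M 2 3 = 0 := by linarith [hs 2 3]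
  have k02 : M 0 2 = 0 := by linarith [hs 0 2]
  have k12 : M 1 2 = 0 := by linarith [hs 1 2, hs 0 3]
  have k03 : M 0 3 = 0 := by linarith [hs 1 2, hs 0 3, k12]
  have k13 : M 1 3 = 0 := by linarith [hs 1 3, hs 0 2, d1, d2, d3, k02]
  have k10 : M 1 0 = 0 := (hs 0 1).trans k01
  have k20 : M 2 0 = 0 := (hs 0 2).trans k02
  have k30 : M 3 0 = 0 := (hs 0 3).trans k03
  have k21 : M 2 1 = 0 := (hs 1 2).trans k12
  have k31 : M 3 1 = 0 := (hs 1 3).trans k13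
  have k32 : M 3 2 = 0 := (hs 2 3).trans k23
  refine ⟨M 0 0, fun v => ?_⟩
  rw [hf]
  simp [Matrix.mulVec, dotProduct, Fin.sum_univ_four, d1, d2, d3,
    k01, k02, k03, k12, k13, k23, k10, k20, k30, k21, k31, k32]
  ring
end

section
/- Let n be an even positive integer and let p and q be distinct primes. Then the quadratic forms on ℚ^{n+2} given by f(x₁,…,x_{n+2}) = p·x₁² + x₂² + ⋯ + x_{n+1}² − x_{n+2}² and g(x₁,…,x_{n+2}) = q·x₁² + x₂² + ⋯ + x_{n+1}² − x_{n+2}² are not projectively equivalent over ℚ: there is no positive rational number m such that m·f is equivalent to g. -/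
/-- The quadratic form `p·x₁² + x₂² + ⋯ + x_{n+1}² − x_{n+2}²` on `ℚ^{n+2}`. -/
noncomputable def lorentzForm (n : ℕ) (p : ℕ) : QuadraticForm ℚ (Fin (n + 2) → ℚ) :=
  QuadraticMap.weightedSumSquares ℚ
    (fun i : Fin (n + 2) => if (i : ℕ) = 0 then (p : ℚ) else if (i : ℕ) = n + 1 then -1 else 1)

open QuadraticMap Matrix in
lemma toMatrix'_wss {N : ℕ} (w : Fin N → ℚ) :
    QuadraticForm.toMatrix' (QuadraticMap.weightedSumSquares ℚ w) = Matrix.diagonal w := by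
  ext i j
  rw [QuadraticForm.toMatrix', LinearMap.toMatrix₂'_apply, associated_apply]
  simp [weightedSumSquares_apply, Pi.single_apply, mul_ite, ite_mul, Finset.sum_ite_eq',
    Matrix.diagonal_apply, add_mul, mul_add, Finset.sum_add_distrib]
  rcases eq_or_ne i j with rfl | h
  · simp; ring
  · simp [h, Ne.symm h]

lemma prod_w (n p : ℕ) :
    ∏ i : Fin (n+2), (if (i:ℕ) = 0 then (p:ℚ) else if (i:ℕ) = n+1 then -1 else 1)
      = -(p:ℚ) := by
  have h : ∀ i : Fin (n+2),
      (if (i:ℕ) = 0 then (p:ℚ) else if (i:ℕ) = n+1 then -1 else 1)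
      = (if i = 0 then (p:ℚ) else 1) * (if i = Fin.last (n+1) then -1 else 1) := by
    intro i
    have h0 : ((i:ℕ) = 0) ↔ (i = 0) := by rw [Fin.ext_iff, Fin.val_zero]
    have h1 : ((i:ℕ) = n+1) ↔ (i = Fin.last (n+1)) := by rw [Fin.ext_iff, Fin.val_last]
    simp only [h0, h1]
    split_ifs with ha hb hb <;> simp_all
  rw [Finset.prod_congr rfl fun i _ => h i, Finset.prod_mul_distrib,
    Finset.prod_ite_eq' Finset.univ (0 : Fin (n+2)) (fun _ => (p:ℚ)),
    Finset.prod_ite_eq' Finset.univ (Fin.last (n+1)) (fun _ => (-1 : ℚ))]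
  simp

lemma rat_sq_mul_prime_ne (p q : ℕ) (hp : p.Prime) (hq : q.Prime) (hpq : p ≠ q)
    (r : ℚ) (hr : r ≠ 0) : r ^ 2 * (p : ℚ) ≠ (q : ℚ) := by
  intro key
  haveI : Fact p.Prime := ⟨hp⟩
  have hp0 : (p : ℚ) ≠ 0 := Nat.cast_ne_zero.mpr hp.pos.ne'
  have := congrArg (padicValRat p) key
  rw [padicValRat.mul (pow_ne_zero 2 hr) hp0, padicValRat.pow r,
    padicValRat.self hp.one_lt, padicValRat.of_nat,
    padicValNat.eq_zero_of_not_dvd (fun hd => hpq ((Nat.prime_dvd_prime_iff_eq hp hq).mp hd))]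
    at this
  simp at this
  omega

open QuadraticMap Matrix in
lemma discr_lorentz (n p : ℕ) : QuadraticForm.discr' (lorentzForm n p) = -(p:ℚ) := by
  rw [QuadraticForm.discr', lorentzForm, toMatrix'_wss, Matrix.det_diagonal, prod_w]

/-- For `n` even and positive and distinct primes `p`, `q`, the forms
`p·x₁² + x₂² + ⋯ + x_{n+1}² − x_{n+2}²` and `q·x₁² + x₂² + ⋯ + x_{n+1}² − x_{n+2}²`
are not projectively equivalent over `ℚ`. -/
theorem lorentz_forms_not_projectively_equivalent
    (n : ℕ) (hn : 0 < n) (hne : Even n) (p q : ℕ) (hp : p.Prime) (hq : q.Prime)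
    (hpq : p ≠ q) :
    ¬ ProjEquiv (lorentzForm n p) (lorentzForm n q) := by
  rintro ⟨m, hm, C, hC⟩
  have hg : lorentzForm n q = (m • lorentzForm n p).comp
      (Matrix.toLin' (LinearMap.toMatrix' C.toLinearMap)) := by
    ext v
    simp [QuadraticMap.comp_apply, hC v]
  set A := LinearMap.toMatrix' C.toLinearMap with hA
  have hdet : A.det ≠ 0 := by
    have : A * LinearMap.toMatrix' C.symm.toLinearMap = 1 := by
      rw [hA, ← LinearMap.toMatrix'_comp]
      simp
    have := congrArg Matrix.det this
    rw [Matrix.det_mul, Matrix.det_one] at this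
    exact left_ne_zero_of_mul_eq_one this
  have E : QuadraticForm.discr' (lorentzForm n q)
      = (LinearMap.toMatrix' (Matrix.toLin' A)).det * (LinearMap.toMatrix' (Matrix.toLin' A)).det
        * (QuadraticForm.discr' (m • lorentzForm n p)) := by
    rw [hg]; exact QuadraticForm.discr'_comp _
  rw [LinearMap.toMatrix'_toLin', QuadraticForm.discr'_smul, discr_lorentz, discr_lorentz,
    Fintype.card_fin] at E
  obtain ⟨k, hk⟩ := hne
  subst hk
  have hpow : m ^ (k + k + 2) = m ^ (k+1) * m ^ (k+1) := by
    rw [← pow_add]; congr 1; omega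
  rw [hpow] at E
  have hr : A.det * m ^ (k+1) ≠ 0 := mul_ne_zero hdet (pow_ne_zero _ hm.ne')
  generalize hM : m ^ (k+1) = M at E hr
  exact rat_sq_mul_prime_ne p q hp hq hpq (A.det * M) hr (by linear_combination E)
end
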